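/- Let G : P × I → {0,1} with finite nonempty P, I, and let v be the value of the associated zero-sum game. For any ε > 0 and k > ln|P|/(2ε²), there exists a multiset of k inputs such that for every program i ∈ P, the fraction of inputs j in the multiset with G(i,j) = 1 is greater than v − ε. -/

import Mathlib

open Finset

private lemma yao_gpos (p : ℝ) (hp0 : 0 ≤ p) (hp1 : p ≤ 1) (x : ℝ) :
    0 < 1 - p + p * Real.exp (-x) := by
  rcases eq_or_lt_of_le hp1 with h | h
  · subst h; simpa using Real.exp_pos (-x)
  · nlinarith [Real.exp_pos (-x), mul_nonneg hp0 (Real.exp_pos (-x)).le]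

/-- Hoeffding's lemma, Bernoulli case. -/
private lemma yao_hoeffding (p t : ℝ) (hp0 : 0 ≤ p) (hp1 : p ≤ 1) (ht : 0 ≤ t) :
    1 - p + p * Real.exp (-t) ≤ Real.exp (-(t * p) + t ^ 2 / 8) := by
  set g : ℝ → ℝ := fun x => 1 - p + p * Real.exp (-x) with hgdef
  have hgpos : ∀ x, 0 < g x := fun x => yao_gpos p hp0 hp1 x
  have hg' : ∀ x : ℝ, HasDerivAt g (-(p * Real.exp (-x))) x := by
    intro x
    have h1 : HasDerivAt (fun y : ℝ => Real.exp (-y)) (Real.exp (-x) * (-1)) x :=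
      (hasDerivAt_neg x).exp
    have h2 := (h1.const_mul p).const_add (1 - p)
    refine h2.congr_deriv ?_
    ring
  set F : ℝ → ℝ := fun x => -(x * p) + x ^ 2 / 8 - Real.log (g x) with hFdef
  set F1 : ℝ → ℝ := fun x => -p + x / 4 + p * Real.exp (-x) / g x with hF1def
  have hF' : ∀ x : ℝ, HasDerivAt F (F1 x) x := by
    intro x
    have h1 : HasDerivAt (fun y : ℝ => -(y * p) + y ^ 2 / 8)
        (-p + x / 4) x := by
      have hb : HasDerivAt (fun y : ℝ => y ^ 2 / 8) (2 * x ^ 1 / 8) x :=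
        (hasDerivAt_pow 2 x).div_const 8
      have ha : HasDerivAt (fun y : ℝ => -(y * p)) (-p) x := by
        exact ((hasDerivAt_id x).mul_const p).neg.congr_deriv (by ring)
      exact (ha.add hb).congr_deriv (by ring)
    have h2 : HasDerivAt (fun y => Real.log (g y)) (-(p * Real.exp (-x)) / g x) x :=
      (hg' x).log (hgpos x).ne'
    have := h1.sub h2
    refine this.congr_deriv ?_
    simp only [hF1def]
    field_simp
    ring
  have hF1' : ∀ x : ℝ, HasDerivAt F1
      (1 / 4 - p * (1 - p) * Real.exp (-x) / (g x) ^ 2) x := by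
    intro x
    have h1 : HasDerivAt (fun y : ℝ => -p + y / 4) (1 / 4) x := by
      simpa using ((hasDerivAt_id x).div_const 4).const_add (-p)
    have hnum : HasDerivAt (fun y : ℝ => p * Real.exp (-y)) (-(p * Real.exp (-x))) x := by
      have := ((hasDerivAt_neg x).exp).const_mul p
      exact this.congr_deriv (by ring)
    have h2 : HasDerivAt (fun y => p * Real.exp (-y) / g y)
        ((-(p * Real.exp (-x)) * g x - p * Real.exp (-x) * -(p * Real.exp (-x))) / g x ^ 2) x :=
      hnum.div (hg' x) (hgpos x).ne'
    have := h1.add h2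
    refine this.congr_deriv ?_
    have hgx := (hgpos x).ne'
    field_simp
    ring
  -- F1 is monotone
  have hF1mono : Monotone F1 := by
    apply monotone_of_deriv_nonneg
    · exact fun x => (hF1' x).differentiableAt
    · intro x
      rw [(hF1' x).deriv]
      have hkey : 4 * (p * (1 - p) * Real.exp (-x)) ≤ (g x) ^ 2 := by
        have hE := (Real.exp_pos (-x)).le
        have : (1 - p - p * Real.exp (-x)) ^ 2 ≥ 0 := sq_nonneg _
        simp only [hgdef]
        nlinarith
      have hg2 : (0:ℝ) < (g x) ^ 2 := pow_pos (hgpos x) 2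
      rw [sub_nonneg, div_le_iff₀ hg2]
      obtain ⟨a, ha⟩ : ∃ a, g x = a := ⟨_, rfl⟩
      rw [ha] at hkey ⊢
      nlinarith
  have hF10 : F1 0 = 0 := by
    simp only [hF1def, hgdef]
    norm_num
  have hF1nonneg : ∀ x ∈ Set.Ici (0:ℝ), 0 ≤ F1 x := by
    intro x hx
    rw [← hF10]
    exact hF1mono hx
  -- F is monotone on [0, ∞)
  have hFmono : MonotoneOn F (Set.Ici 0) := by
    apply monotoneOn_of_deriv_nonneg (convex_Ici 0)
    · exact (Differentiable.continuous fun x => (hF' x).differentiableAt).continuousOn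
    · intro x _
      exact (hF' x).differentiableAt.differentiableWithinAt
    · intro x hx
      rw [(hF' x).deriv]
      exact hF1nonneg x (le_of_lt (by simpa using hx))
  have hF0 : F 0 = 0 := by
    simp only [hFdef, hgdef]
    norm_num
  have hFt : 0 ≤ F t := by
    rw [← hF0]
    exact hFmono (Set.self_mem_Ici) ht ht
  have hlog : Real.log (g t) ≤ -(t * p) + t ^ 2 / 8 := by
    simp only [hFdef] at hFt; linarith
  calc g t = Real.exp (Real.log (g t)) := (Real.exp_log (hgpos t)).symm
    _ ≤ Real.exp (-(t * p) + t ^ 2 / 8) := Real.exp_le_exp.mpr hlog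

theorem yao_uniform_distributional {P I : Type*} [Fintype P] [Fintype I]
    [Nonempty P] [Nonempty I]
    (G : P → I → ℝ) (hG : ∀ i j, G i j = 0 ∨ G i j = 1)
    (ε : ℝ) (hε : 0 < ε) (k : ℕ) (hk : 0 < k)
    (hkP : Real.log (Fintype.card P) / (2 * ε ^ 2) < k) :
    ∃ T : Fin k → I, ∀ i : P,
      (⨆ q : stdSimplex ℝ I, ⨅ i' : P, ∑ j, q.1 j * G i' j) - ε <
        (1 / k : ℝ) * ∑ m, G i (T m) := by
  classical
  haveI : Nonempty (stdSimplex ℝ I) :=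
    ⟨⟨fun j => if j = Classical.arbitrary I then 1 else 0,
      fun j => by dsimp only; split <;> norm_num, by simp⟩⟩
  set v : ℝ := ⨆ q : stdSimplex ℝ I, ⨅ i' : P, ∑ j, q.1 j * G i' j with hv
  set n : ℝ := (Fintype.card P : ℝ) with hn
  have hn1 : (1:ℝ) ≤ n := by
    simp only [hn]
    exact_mod_cast Fintype.card_pos
  have hkR : (0:ℝ) < (k:ℝ) := by exact_mod_cast hk
  have hlogn : Real.log n < (k:ℝ) * (2 * ε ^ 2) := by
    rw [div_lt_iff₀ (by positivity)] at hkP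
    exact hkP
  set δ : ℝ := ((k:ℝ) * (2 * ε ^ 2) - Real.log n) / (8 * ε * (k:ℝ)) with hδdef
  have hδ : 0 < δ := by
    apply div_pos (by linarith) (by positivity)
  obtain ⟨q, hq⟩ : ∃ q : stdSimplex ℝ I, v - δ < ⨅ i' : P, ∑ j, q.1 j * G i' j :=
    exists_lt_of_lt_ciSup (by rw [← hv]; linarith)
  set μ : P → ℝ := fun i => ∑ j, q.1 j * G i j with hμdef
  have hμv : ∀ i, v - δ < μ i := fun i =>
    lt_of_lt_of_le hq (ciInf_le (Set.Finite.bddBelow (Set.finite_range _)) i)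
  have hG0 : ∀ i j, 0 ≤ G i j := by
    intro i j; rcases hG i j with h | h <;> rw [h] <;> norm_num
  have hG1 : ∀ i j, G i j ≤ 1 := by
    intro i j; rcases hG i j with h | h <;> rw [h] <;> norm_num
  have hμ0 : ∀ i, 0 ≤ μ i := fun i =>
    Finset.sum_nonneg fun j _ => mul_nonneg (q.2.1 j) (hG0 i j)
  have hμ1 : ∀ i, μ i ≤ 1 := by
    intro i
    calc μ i ≤ ∑ j, q.1 j := Finset.sum_le_sum fun j _ => by
          nlinarith [q.2.1 j, hG1 i j, hG0 i j]
      _ = 1 := q.2.2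
  set t : ℝ := 4 * ε with htdef
  have ht0 : 0 ≤ t := by positivity
  set w : (Fin k → I) → ℝ := fun T => ∏ m, q.1 (T m) with hwdef
  have hw0 : ∀ T, 0 ≤ w T := fun T => Finset.prod_nonneg fun m _ => q.2.1 (T m)
  have hwsum : ∑ T : Fin k → I, w T = 1 := by
    rw [hwdef, ← Fintype.prod_sum (fun _ j => q.1 j)]
    simp [q.2.2]
  set bad : P → Finset (Fin k → I) :=
    fun i => univ.filter (fun T => ∑ m, G i (T m) ≤ (k:ℝ) * (v - ε)) with hbaddef
  have key : ∀ i, ∑ T ∈ bad i, w T ≤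
      Real.exp ((k:ℝ) * (t * (v - ε) - t * μ i + t ^ 2 / 8)) := by
    intro i
    have hsum1 : ∑ T ∈ bad i, w T ≤
        ∑ T ∈ bad i, w T * Real.exp (t * ((k:ℝ) * (v - ε) - ∑ m, G i (T m))) := by
      apply Finset.sum_le_sum
      intro T hT
      rw [Finset.mem_filter] at hT
      have hexp : 1 ≤ Real.exp (t * ((k:ℝ) * (v - ε) - ∑ m, G i (T m))) := by
        rw [← Real.exp_zero]
        apply Real.exp_le_exp.mpr
        have := hT.2
        nlinarith
      nlinarith [hw0 T]
    have hsum2 : ∑ T ∈ bad i, w T * Real.exp (t * ((k:ℝ) * (v - ε) - ∑ m, G i (T m))) ≤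
        ∑ T : Fin k → I, w T * Real.exp (t * ((k:ℝ) * (v - ε) - ∑ m, G i (T m))) := by
      apply Finset.sum_le_sum_of_subset_of_nonneg (Finset.filter_subset _ _)
      intro T _ _
      exact mul_nonneg (hw0 T) (Real.exp_pos _).le
    have hsum3 : ∑ T : Fin k → I, w T * Real.exp (t * ((k:ℝ) * (v - ε) - ∑ m, G i (T m))) =
        Real.exp (t * (k:ℝ) * (v - ε)) *
          ∑ T : Fin k → I, ∏ m, (q.1 (T m) * Real.exp (-(t * G i (T m)))) := by
      rw [Finset.mul_sum]
      apply Finset.sum_congr rfl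
      intro T _
      have e1 : t * ((k:ℝ) * (v - ε) - ∑ m, G i (T m)) =
          t * (k:ℝ) * (v - ε) + ∑ m, -(t * G i (T m)) := by
        rw [Finset.sum_neg_distrib, ← Finset.mul_sum]
        ring
      simp only [hwdef]
      rw [e1, Real.exp_add, Real.exp_sum, Finset.prod_mul_distrib]
      ring
    have hsum4 : ∑ T : Fin k → I, ∏ m, (q.1 (T m) * Real.exp (-(t * G i (T m)))) =
        (1 - μ i + μ i * Real.exp (-t)) ^ k := by
      rw [← Fintype.prod_sum (fun (_ : Fin k) j => q.1 j * Real.exp (-(t * G i j)))]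
      have hinner : ∑ j, q.1 j * Real.exp (-(t * G i j)) =
          1 - μ i + μ i * Real.exp (-t) := by
        have : ∀ j, q.1 j * Real.exp (-(t * G i j)) =
            q.1 j * (1 - G i j) + q.1 j * G i j * Real.exp (-t) := by
          intro j
          rcases hG i j with h | h <;> simp [h]
        rw [Finset.sum_congr rfl fun j _ => this j, Finset.sum_add_distrib]
        have e1 : ∑ j, q.1 j * (1 - G i j) = 1 - μ i := by
          simp_rw [mul_sub, mul_one, Finset.sum_sub_distrib, q.2.2]
          rfl
        have e2 : ∑ j, q.1 j * G i j * Real.exp (-t) = μ i * Real.exp (-t) := by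
          rw [← Finset.sum_mul]
        rw [e1, e2]
      rw [Finset.prod_congr rfl fun m _ => hinner]
      simp
    have hbase : 0 ≤ 1 - μ i + μ i * Real.exp (-t) :=
      (yao_gpos (μ i) (hμ0 i) (hμ1 i) t).le
    have hpow : (1 - μ i + μ i * Real.exp (-t)) ^ k ≤
        (Real.exp (-(t * μ i) + t ^ 2 / 8)) ^ k :=
      pow_le_pow_left₀ hbase (yao_hoeffding (μ i) t (hμ0 i) (hμ1 i) ht0) k
    calc ∑ T ∈ bad i, w T
        ≤ Real.exp (t * (k:ℝ) * (v - ε)) * (1 - μ i + μ i * Real.exp (-t)) ^ k := by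
          rw [← hsum4, ← hsum3]; exact le_trans hsum1 hsum2
      _ ≤ Real.exp (t * (k:ℝ) * (v - ε)) * (Real.exp (-(t * μ i) + t ^ 2 / 8)) ^ k :=
          mul_le_mul_of_nonneg_left hpow (Real.exp_pos _).le
      _ = Real.exp ((k:ℝ) * (t * (v - ε) - t * μ i + t ^ 2 / 8)) := by
          rw [← Real.exp_nat_mul, ← Real.exp_add]
          congr 1
          ring
  have key2 : ∀ i, ∑ T ∈ bad i, w T ≤
      Real.exp ((k:ℝ) * (t * δ - t * ε + t ^ 2 / 8)) := by
    intro i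
    refine le_trans (key i) (Real.exp_le_exp.mpr ?_)
    apply mul_le_mul_of_nonneg_left _ hkR.le
    have h1 : v - μ i < δ := by linarith [hμv i]
    nlinarith
  by_contra hcon
  push_neg at hcon
  have hbadmem : ∀ T : Fin k → I, ∃ i, T ∈ bad i := by
    intro T
    obtain ⟨i, hi⟩ := hcon T
    refine ⟨i, Finset.mem_filter.mpr ⟨Finset.mem_univ _, ?_⟩⟩
    have h2 := mul_le_mul_of_nonneg_left hi hkR.le
    rw [← mul_assoc, mul_one_div_cancel hkR.ne', one_mul] at h2
    exact h2
  have hchain : (1:ℝ) ≤ n * Real.exp ((k:ℝ) * (t * δ - t * ε + t ^ 2 / 8)) := by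
    calc (1:ℝ) = ∑ T : Fin k → I, w T := hwsum.symm
      _ ≤ ∑ T : Fin k → I, ∑ i : P, (if T ∈ bad i then w T else 0) := by
          apply Finset.sum_le_sum
          intro T _
          obtain ⟨i₀, hi₀⟩ := hbadmem T
          have := Finset.single_le_sum
            (f := fun i => if T ∈ bad i then w T else 0)
            (fun i _ => by split <;> [exact hw0 T; exact le_rfl])
            (Finset.mem_univ i₀)
          simpa [hi₀] using this
      _ = ∑ i : P, ∑ T ∈ bad i, w T := by
          rw [Finset.sum_comm]
          exact Finset.sum_congr rfl fun i _ => by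
            rw [Finset.sum_ite_mem, Finset.univ_inter]
      _ ≤ ∑ _i : P, Real.exp ((k:ℝ) * (t * δ - t * ε + t ^ 2 / 8)) :=
          Finset.sum_le_sum fun i _ => key2 i
      _ = n * Real.exp ((k:ℝ) * (t * δ - t * ε + t ^ 2 / 8)) := by
          rw [Finset.sum_const, Finset.card_univ, nsmul_eq_mul, hn]
  have hlt : n * Real.exp ((k:ℝ) * (t * δ - t * ε + t ^ 2 / 8)) < 1 := by
    have hn0 : (0:ℝ) < n := by linarith
    have hE : (k:ℝ) * (t * δ - t * ε + t ^ 2 / 8) =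
        ((k:ℝ) * (2 * ε ^ 2) - Real.log n) / 2 - (k:ℝ) * (2 * ε ^ 2) := by
      rw [htdef, hδdef]
      field_simp
      ring
    rw [← Real.exp_log hn0, ← Real.exp_add, hE]
    rw [Real.exp_lt_one_iff]
    linarith
  linarith
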